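/- arXiv:2510.24629 — 2 statements merged into one kernel-verified Lean document; each statement's English description precedes it below -/
import Mathlib

section
/- Let C be a small category, X a category, L : (Cᵒᵖ ⥤ Type) ⥤ X a left adjoint with fully faithful right adjoint i : X ⥤ (Cᵒᵖ ⥤ Type), and let x^* : X ⥤ Type be a colimit-preserving functor. Set f_x := yoneda ⋙ L ⋙ x^* : C ⥤ Type and N_C(x) := (Elements f_x)ᵒᵖ. Then for every object F of X there is an isomorphism x^*(F) ≅ colim over N_C(x) of the diagram sending (U, ξ) to Hom_X(L(yoneda.obj U), F) (where a morphism (U, ξ) → (U', ξ') of N_C(x), i.e. a morphism u : U' → U in C with f_x(u)(ξ') = ξ, acts by precomposition with L(yoneda.map u)), and this isomorphism is natural in F. -/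
/-!
STATEMENT 2: Let `C` be a small category, `L : (Cᵒᵖ ⥤ Type) ⥤ X` a left adjoint with
fully faithful right adjoint `i`, and `x^* : X ⥤ Type` colimit-preserving. With
`f_x := yoneda ⋙ L ⋙ x^*` and `N_C(x) := (Elements f_x)ᵒᵖ`, there is an isomorphism,
natural in `F : X`, between `x^*(F)` and the colimit over `N_C(x)` of the diagram
`(U, ξ) ↦ Hom_X(L(yoneda.obj U), F)` (morphisms acting by precomposition with
`L(yoneda.map u)`).  We state naturality as an isomorphism of functors `X ⥤ Type`,
where the target is built from the Yoneda embedding of `X`, restriction along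
`(π_{f_x})ᵒᵖ ⋙ (yoneda ⋙ L)ᵒᵖ`, and the colimit functor.
-/

open CategoryTheory CategoryTheory.Limits

universe v u

section Aux

variable {C : Type u} [SmallCategory C] (f : C ⥤ Type u)

/-- Cocone on `π.op ⋙ yoneda.obj U` with point `f.obj U`. -/
@[simps]
def coyonedaCocone (U : C) :
    Cocone ((CategoryOfElements.π f).op ⋙ yoneda.obj U) where
  pt := f.obj U
  ι :=
    { app := fun j => TypeCat.ofHom (fun u => f.map u j.unop.2)
      naturality := by
        rintro j j' h
        ext u
        show f.map (h.unop.1 ≫ u) j'.unop.2 = f.map u j.unop.2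
        exact (FunctorToTypes.map_comp_apply f _ u _).trans (congrArg (fun y => f.map u y) h.unop.2) }

def coyonedaCoconeIsColimit (U : C) : IsColimit (coyonedaCocone f U) where
  desc s := TypeCat.ofHom (fun x => s.ι.app (Opposite.op ⟨U, x⟩) (𝟙 U))
  fac s j := by
    ext u
    have := s.w ((CategoryOfElements.homMk j.unop ⟨U, f.map u j.unop.2⟩ u rfl).op)
    have h2 := ConcreteCategory.congr_hom this (𝟙 U)
    dsimp at h2 ⊢
    refine h2.symm.trans ?_
    show s.ι.app j (u ≫ 𝟙 U) = s.ι.app j u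
    rw [Category.comp_id]
  uniq s m hm := by
    ext x
    have : (coyonedaCocone f U).ι.app (Opposite.op ⟨U, x⟩) (𝟙 U) = x := by
      show f.map (𝟙 U) x = x
      exact FunctorToTypes.map_id_apply f x
    conv_lhs => rw [← this]
    exact ConcreteCategory.congr_hom (hm (Opposite.op ⟨U, x⟩)) (𝟙 U)

end Aux

theorem stmt2 {C : Type u} [SmallCategory C] {X : Type v} [Category.{u} X]
    (L : (Cᵒᵖ ⥤ Type u) ⥤ X) (i : X ⥤ (Cᵒᵖ ⥤ Type u)) (adj : L ⊣ i)
    [i.Full] [i.Faithful]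
    (xs : X ⥤ Type u) [PreservesColimits xs] :
    Nonempty (xs ≅ yoneda ⋙
      (Functor.whiskeringLeft ((yoneda ⋙ L ⋙ xs).Elements)ᵒᵖ Xᵒᵖ (Type u)).obj
        ((CategoryOfElements.π (yoneda ⋙ L ⋙ xs)).op ⋙ (yoneda ⋙ L).op) ⋙ colim) := by
  set f : C ⥤ Type u := yoneda ⋙ L ⋙ xs with hf
  -- the "restriction along π.op then colimit" functor
  let K : (Cᵒᵖ ⥤ Type u) ⥤ Type u :=
    (Functor.whiskeringLeft f.Elementsᵒᵖ Cᵒᵖ (Type u)).obj (CategoryOfElements.π f).op ⋙ colim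
  have hL : PreservesColimits L := adj.leftAdjoint_preservesColimits
  -- `K` restricted along yoneda is `f`
  let e1 : yoneda ⋙ K ≅ f :=
    NatIso.ofComponents
      (fun U => (colimit.isColimit _).coconePointUniqueUpToIso (coyonedaCoconeIsColimit f U))
      (by
        intro U U' v
        apply colimit.hom_ext
        intro j
        dsimp [K]
        rw [ι_colimMap_assoc]
        erw [colimit.comp_coconePointUniqueUpToIso_hom]
        erw [colimit.comp_coconePointUniqueUpToIso_hom_assoc]
        ext u
        dsimp [coyonedaCocone]
        exact FunctorToTypes.map_comp_apply f u v _)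
  let eY : uliftYoneda.{u} (C := C) ≅ yoneda := uliftYonedaIsoYoneda.{u, u}
  let e1' : uliftYoneda.{u} ⋙ K ≅ f := Functor.isoWhiskerRight eY K ≪≫ e1
  let e2 : f ≅ uliftYoneda.{u} ⋙ (L ⋙ xs) := (Functor.isoWhiskerRight eY (L ⋙ xs)).symm
  have h1 : K.IsLeftKanExtension e1'.symm.hom :=
    Presheaf.isLeftKanExtension_of_preservesColimits K e1'.symm
  have h2 : (L ⋙ xs).IsLeftKanExtension e2.hom :=
    Presheaf.isLeftKanExtension_of_preservesColimits (L ⋙ xs) e2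
  -- uniqueness of the left Kan extension
  let e4 : K ≅ L ⋙ xs :=
    Functor.leftKanExtensionUnique K e1'.symm.hom (L ⋙ xs) e2.hom
  let e3 : yoneda ⋙ L ≅ uliftYoneda.{u} ⋙ L := (Functor.isoWhiskerRight eY L).symm
  haveI : uliftYoneda.{u}.HasPointwiseLeftKanExtension (yoneda ⋙ L) := fun P => by
    haveI : HasColimit (CostructuredArrow.proj uliftYoneda.{u} P ⋙ uliftYoneda.{u} ⋙ L) :=
      HasColimit.mk ⟨_, isColimitOfPreserves L (Presheaf.isColimitTautologicalCocone'.{u} P)⟩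
    exact hasColimit_of_iso (Functor.isoWhiskerLeft _ e3)
  -- `i` is isomorphic to the restricted yoneda functor of `yoneda ⋙ L`
  have hLK : L.IsLeftKanExtension e3.hom :=
    Presheaf.isLeftKanExtension_of_preservesColimits L e3
  let adj' : L ⊣ Presheaf.restrictedULiftYoneda.{u} (yoneda ⋙ L) :=
    Presheaf.uliftYonedaAdjunction L e3.hom
  let e5 : i ≅ Presheaf.restrictedULiftYoneda.{u} (yoneda ⋙ L) := adj.rightAdjointUniq adj'
  -- assemble
  haveI : IsIso adj.counit := adj.counit_isIso_of_R_fully_faithful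
  refine ⟨?_⟩
  calc xs ≅ i ⋙ L ⋙ xs :=
        (xs.leftUnitor).symm ≪≫ Functor.isoWhiskerRight (asIso adj.counit).symm xs ≪≫
          Functor.associator i L xs
    _ ≅ i ⋙ K := Functor.isoWhiskerLeft i e4.symm
    _ ≅ Presheaf.restrictedULiftYoneda.{u} (yoneda ⋙ L) ⋙ K := Functor.isoWhiskerRight e5 K
    _ ≅ (yoneda ⋙ (Functor.whiskeringLeft _ _ _).obj (yoneda ⋙ L).op) ⋙ K :=
      Functor.isoWhiskerRight (Functor.isoWhiskerRight (uliftYonedaIsoYoneda.{u, u} (C := X)) _) K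
    _ ≅ _ := Iso.refl _
end

section
/- Let 𝒞 be a category with finite products (in particular a terminal object ⊤_𝒞) and 𝒟 a cartesian closed category. Suppose given an adjoint triple f_♯ ⊣ f^* ⊣ f_*, where f_♯ : 𝒞 ⥤ 𝒟, f^* : 𝒟 ⥤ 𝒞, f_* : 𝒞 ⥤ 𝒟, and suppose that for all objects A of 𝒞 and B of 𝒟 the projection-formula morphism f_♯(A ⨯ f^*(B)) → f_♯(A) ⨯ B is an isomorphism. Then there is a natural isomorphism of functors f_* ∘ f^* ≅ (f_♯(⊤_𝒞) ⟹ −) : 𝒟 ⥤ 𝒟, i.e. the composite f_* f^* is corepresented internally by the object f_♯(⊤_𝒞). -/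
/-!
STATEMENT 5: Given an adjoint triple `f_♯ ⊣ f^* ⊣ f_*` with `f_♯ : C ⥤ D`,
`f^* : D ⥤ C`, `f_* : C ⥤ D`, where `C` has finite products and `D` is cartesian
closed, if the projection-formula morphism `f_♯(A ⨯ f^*(B)) ⟶ f_♯(A) ⨯ B` is an
isomorphism for all `A : C`, `B : D`, then there is a natural isomorphism
`f^* ⋙ f_* ≅ (f_♯(⊤_C) ⟹ −)`, i.e. `f_* f^*` is corepresented internally by
`f_♯(⊤_C)`.
-/

open CategoryTheory CategoryTheory.Limits MonoidalCategory

universe v u u'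

theorem stmt5 {C : Type u} [Category.{v} C] {D : Type u'} [Category.{v} D]
    [CartesianMonoidalCategory C] [CartesianMonoidalCategory D] [MonoidalClosed D]
    (fShriek : C ⥤ D) (fStar : D ⥤ C) (fLower : C ⥤ D)
    (adj₁ : fShriek ⊣ fStar) (adj₂ : fStar ⊣ fLower)
    (hproj : ∀ (A : C) (B : D),
      IsIso (CartesianMonoidalCategory.lift
        (fShriek.map (CartesianMonoidalCategory.fst A (fStar.obj B)))
        (fShriek.map (CartesianMonoidalCategory.snd A (fStar.obj B)) ≫ adj₁.counit.app B))) :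
    Nonempty (fStar ⋙ fLower ≅ ihom (fShriek.obj (⊤_ C))) := by
  constructor
  have hiso : ∀ (A : C),
      IsIso (CartesianMonoidalCategory.lift (terminal.from A) (𝟙 A)) := by
    intro A
    refine ⟨CartesianMonoidalCategory.snd _ _, ?_, ?_⟩
    · simp
    · apply CartesianMonoidalCategory.hom_ext
      · apply Subsingleton.elim
      · simp
  have e : fStar ⋙ fShriek ≅ tensorLeft (fShriek.obj (⊤_ C)) := by
    refine NatIso.ofComponents (fun X =>
      (haveI := hiso (fStar.obj X);
        asIso (fShriek.map
          (CartesianMonoidalCategory.lift (terminal.from (fStar.obj X)) (𝟙 _)))) ≪≫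
      (haveI := hproj (⊤_ C) X;
        asIso (CartesianMonoidalCategory.lift
          (fShriek.map (CartesianMonoidalCategory.fst (⊤_ C) (fStar.obj X)))
          (fShriek.map (CartesianMonoidalCategory.snd (⊤_ C) (fStar.obj X)) ≫
            adj₁.counit.app X)))) ?_
    intro X Y g
    apply CartesianMonoidalCategory.hom_ext
    · simp [← fShriek.map_comp]
    · simp only [Iso.trans_hom, asIso_hom, Functor.comp_map, curriedTensor_obj_obj,
        curriedTensor_obj_map, Category.assoc, CartesianMonoidalCategory.lift_snd,
        CartesianMonoidalCategory.whiskerLeft_snd]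
      have h' : ∀ (Z W : D) (k : fShriek.obj (fStar.obj Z) ⟶ W),
          fShriek.map (CartesianMonoidalCategory.lift
            (terminal.from (fStar.obj Z)) (𝟙 (fStar.obj Z))) ≫
            fShriek.map (CartesianMonoidalCategory.snd (⊤_ C) (fStar.obj Z)) ≫ k = k := by
        intro Z W k
        rw [← Category.assoc, ← fShriek.map_comp]
        simp
      rw [h' Y, CartesianMonoidalCategory.lift_snd_assoc, Category.assoc, h' X]
      simp [adj₁.counit.naturality g]
  exact ((adj₂.comp adj₁).ofNatIsoLeft e).rightAdjointUniq
    (ihom.adjunction (fShriek.obj (⊤_ C)))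
end
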